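/- arXiv:1601.05311 — 4 statements merged into one kernel-verified Lean document; each statement's English description precedes it below -/
import Mathlib

section
/- For u, v, w in the Sobolev space H²(𝕋) of the one-dimensional torus, the bound |⟨∂ₓ²u, vw − e^{τ∂ₓ³}[(e^{−τ∂ₓ³}v)(e^{−τ∂ₓ³}w)]⟩_{L²}| ≤ c·τ·‖∂ₓ²u‖_{L²}·‖∂ₓ²v‖_{L²}·‖∂ₓ²w‖_{L²} holds for all τ > 0, with a constant c independent of τ, u, v, w. -/
namespace AiryAux

/-- `|1 - e^{ix}| ≤ |x|`. -/
lemma norm_one_sub_exp (x : ℝ) : ‖1 - Complex.exp ((x : ℂ) * Complex.I)‖ ≤ |x| := by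
  have h1 : Complex.exp ((x:ℂ) * Complex.I) = (Real.cos x : ℂ) + (Real.sin x : ℂ) * Complex.I := by
    rw [Complex.exp_mul_I, Complex.ofReal_cos, Complex.ofReal_sin]
  have hre : (1 - Complex.exp ((x:ℂ) * Complex.I)).re = 1 - Real.cos x := by
    rw [h1]; simp [Complex.cos_ofReal_re]
  have him : (1 - Complex.exp ((x:ℂ) * Complex.I)).im = - Real.sin x := by
    rw [h1]; simp [Complex.sin_ofReal_re]
  have hnorm : ‖1 - Complex.exp ((x:ℂ)*Complex.I)‖
      = Real.sqrt ((1 - Real.cos x)^2 + (Real.sin x)^2) := by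
    rw [Complex.norm_def, Complex.normSq_apply, hre, him]
    ring_nf
  rw [hnorm]
  have hc : 1 - x^2/2 ≤ Real.cos x := Real.one_sub_sq_div_two_le_cos
  have hs := Real.sin_sq_add_cos_sq x
  have hc1 : Real.cos x ≤ 1 := Real.cos_le_one x
  have hle : (1 - Real.cos x)^2 + (Real.sin x)^2 ≤ x^2 := by nlinarith
  calc Real.sqrt ((1 - Real.cos x)^2 + (Real.sin x)^2) ≤ Real.sqrt (x^2) :=
        Real.sqrt_le_sqrt hle
    _ = |x| := Real.sqrt_sq_eq_abs x

/-- Finset Cauchy–Schwarz with tail bounds. -/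
lemma finset_cs (s : Finset ℤ) (f g : ℤ → ℝ) (hf0 : ∀ k, 0 ≤ f k) (hg0 : ∀ k, 0 ≤ g k)
    {Sa Sb : ℝ} (hSa : ∑ k ∈ s, f k ^ 2 ≤ Sa) (hSb : ∑ k ∈ s, g k ^ 2 ≤ Sb) :
    ∑ k ∈ s, f k * g k ≤ Real.sqrt Sa * Real.sqrt Sb := by
  have h1 := Finset.sum_mul_sq_le_sq_mul_sq s f g
  have h4 : (0:ℝ) ≤ ∑ k ∈ s, f k * g k :=
    Finset.sum_nonneg fun k _ => mul_nonneg (hf0 k) (hg0 k)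
  have hfs : (0:ℝ) ≤ ∑ k ∈ s, f k ^ 2 := Finset.sum_nonneg fun k _ => sq_nonneg _
  have hgs : (0:ℝ) ≤ ∑ k ∈ s, g k ^ 2 := Finset.sum_nonneg fun k _ => sq_nonneg _
  have hSa0 : 0 ≤ Sa := le_trans hfs hSa
  have h2 : (∑ k ∈ s, f k * g k)^2 ≤ Sa * Sb := by nlinarith
  calc ∑ k ∈ s, f k * g k = Real.sqrt ((∑ k ∈ s, f k * g k)^2) := (Real.sqrt_sq h4).symm
    _ ≤ Real.sqrt (Sa * Sb) := Real.sqrt_le_sqrt h2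
    _ = Real.sqrt Sa * Real.sqrt Sb := Real.sqrt_mul hSa0 _

/-- Cauchy–Schwarz for tsums of nonnegative sequences. -/
lemma cs_tsum {f g : ℤ → ℝ} (hf0 : ∀ k, 0 ≤ f k) (hg0 : ∀ k, 0 ≤ g k)
    (hf : Summable fun k => f k ^ 2) (hg : Summable fun k => g k ^ 2) :
    Summable (fun k => f k * g k) ∧
      ∑' k, f k * g k ≤ Real.sqrt (∑' k, f k ^ 2) * Real.sqrt (∑' k, g k ^ 2) := by
  have hsum : Summable (fun k => f k * g k) := by
    refine Summable.of_nonneg_of_le (fun k => mul_nonneg (hf0 k) (hg0 k))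
      (fun k => ?_) ((hf.add hg).mul_left (1/2 : ℝ))
    nlinarith [sq_nonneg (f k - g k)]
  refine ⟨hsum, Summable.tsum_le_of_sum_le hsum fun s => ?_⟩
  exact finset_cs s f g hf0 hg0 (Summable.sum_le_tsum s (fun _ _ => sq_nonneg _) hf)
    (Summable.sum_le_tsum s (fun _ _ => sq_nonneg _) hg)

/-- shift by `c - ·`. -/
lemma shift_subLeft (f : ℤ → ℝ) (hf : Summable f) (c : ℤ) :
    Summable (fun x : ℤ => f (c - x)) ∧ ∑' x, f (c - x) = ∑' x, f x := by
  have h1 : Summable ((fun x => f x) ∘ (Equiv.subLeft c)) := (Equiv.subLeft c).summable_iff.mpr hf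
  have h2 := (Equiv.subLeft c).tsum_eq (fun x => f x)
  constructor
  · exact h1.congr fun x => by simp [Function.comp, Equiv.subLeft_apply]
  · rw [← h2]; exact tsum_congr fun x => by simp [Equiv.subLeft_apply]

/-- shift by `- · - c`. -/
lemma shift_negSub (f : ℤ → ℝ) (hf : Summable f) (c : ℤ) :
    Summable (fun x : ℤ => f (-x - c)) ∧ ∑' x, f (-x - c) = ∑' x, f x := by
  have hinv : Function.Involutive (fun x : ℤ => -x - c) := fun x => by ring
  have h1 : Summable ((fun x => f x) ∘ (Function.Involutive.toPerm _ hinv)) :=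
    (Function.Involutive.toPerm _ hinv).summable_iff.mpr hf
  have h2 := (Function.Involutive.toPerm _ hinv).tsum_eq (fun x => f x)
  have hc : ∀ x : ℤ, (Function.Involutive.toPerm _ hinv) x = -x - c := fun x => by
    simp [Function.Involutive.coe_toPerm]
  constructor
  · exact h1.congr fun x => by simp [Function.comp, hc]
  · rw [← h2]; exact tsum_congr fun x => by rw [hc]

/-- `ℓ¹ * ℓ² * ℓ²` Young-type bound for the double sum `∑_{k,j} a k d j b (-k-j)`. -/
lemma young_cs {a b d : ℤ → ℝ} (ha0 : ∀ k, 0 ≤ a k) (hb0 : ∀ k, 0 ≤ b k) (hd0 : ∀ k, 0 ≤ d k)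
    (hA : Summable fun k => a k ^ 2) (hB : Summable fun k => b k ^ 2) (hD : Summable d) :
    Summable (fun k : ℤ => a k * ∑' j, d j * b (-k - j)) ∧
      ∑' k, a k * ∑' j, d j * b (-k - j) ≤
        (∑' j, d j) * Real.sqrt (∑' k, a k ^ 2) * Real.sqrt (∑' k, b k ^ 2) := by
  set A := Real.sqrt (∑' k, a k ^ 2) with hAdef
  set B := Real.sqrt (∑' k, b k ^ 2) with hBdef
  set D := ∑' j, d j with hDdef
  have hD0 : 0 ≤ D := tsum_nonneg hd0
  have hB2 : (0:ℝ) ≤ ∑' k, b k ^ 2 := tsum_nonneg fun _ => sq_nonneg _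
  have hb_le : ∀ m, b m ≤ B := by
    intro m
    have h1 : b m ^ 2 ≤ ∑' k, b k ^ 2 := Summable.le_tsum hB m fun _ _ => sq_nonneg _
    calc b m = Real.sqrt (b m ^ 2) := (Real.sqrt_sq (hb0 m)).symm
      _ ≤ B := Real.sqrt_le_sqrt h1
  -- shifted squares in j, for fixed k
  have hbsJ : ∀ k : ℤ, Summable (fun j => b (-k - j) ^ 2) :=
    fun k => (shift_subLeft (fun x => b x ^ 2) hB (-k)).1
  have hbtJ : ∀ k : ℤ, ∑' j, b (-k - j) ^ 2 = ∑' x, b x ^ 2 :=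
    fun k => (shift_subLeft (fun x => b x ^ 2) hB (-k)).2
  -- shifted squares in k, for fixed j
  have hbsK : ∀ j : ℤ, Summable (fun k => b (-k - j) ^ 2) :=
    fun j => (shift_negSub (fun x => b x ^ 2) hB j).1
  have hbtK : ∀ j : ℤ, ∑' k, b (-k - j) ^ 2 = ∑' x, b x ^ 2 :=
    fun j => (shift_negSub (fun x => b x ^ 2) hB j).2
  -- rows are summable
  have hrow1 : ∀ k : ℤ, Summable (fun j => d j * b (-k - j)) := by
    intro k
    refine Summable.of_nonneg_of_le (fun j => mul_nonneg (hd0 j) (hb0 _))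
      (fun j => ?_) (hD.mul_right B)
    exact mul_le_mul_of_nonneg_left (hb_le _) (hd0 j)
  have hrow2 : ∀ k : ℤ, Summable (fun j => d j * b (-k - j) ^ 2) := by
    intro k
    refine Summable.of_nonneg_of_le (fun j => mul_nonneg (hd0 j) (sq_nonneg _))
      (fun j => ?_) (hD.mul_right (∑' x, b x ^ 2))
    exact mul_le_mul_of_nonneg_left (Summable.le_tsum hB _ fun _ _ => sq_nonneg _) (hd0 j)
  set R : ℤ → ℝ := fun k => ∑' j, d j * b (-k - j) with hRdef
  have hR0 : ∀ k, 0 ≤ R k := fun k => tsum_nonneg fun j => mul_nonneg (hd0 j) (hb0 _)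
  set T : ℤ → ℝ := fun k => ∑' j, d j * b (-k - j) ^ 2 with hTdef
  have hT0 : ∀ k, 0 ≤ T k := fun k => tsum_nonneg fun j => mul_nonneg (hd0 j) (sq_nonneg _)
  -- R k ≤ √D * √(T k), hence R k ^ 2 ≤ D * T k
  have hRsq : ∀ k, R k ^ 2 ≤ D * T k := by
    intro k
    have hcs := cs_tsum (f := fun j => Real.sqrt (d j))
      (g := fun j => Real.sqrt (d j) * b (-k - j))
      (fun j => Real.sqrt_nonneg _) (fun j => mul_nonneg (Real.sqrt_nonneg _) (hb0 _))
      (by refine hD.congr fun j => ?_; rw [Real.sq_sqrt (hd0 j)])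
      (by refine (hrow2 k).congr fun j => ?_; rw [mul_pow, Real.sq_sqrt (hd0 j)])
    have he1 : ∑' j, Real.sqrt (d j) * (Real.sqrt (d j) * b (-k - j)) = R k := by
      refine tsum_congr fun j => ?_
      rw [← mul_assoc, Real.mul_self_sqrt (hd0 j)]
    have he2 : ∑' j, Real.sqrt (d j) ^ 2 = D := tsum_congr fun j => Real.sq_sqrt (hd0 j)
    have he3 : ∑' j, (Real.sqrt (d j) * b (-k - j)) ^ 2 = T k := by
      refine tsum_congr fun j => ?_
      rw [mul_pow, Real.sq_sqrt (hd0 j)]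
    have h4 := hcs.2
    rw [he1, he2, he3] at h4
    calc R k ^ 2 ≤ (Real.sqrt D * Real.sqrt (T k)) ^ 2 := by
          have := hR0 k; nlinarith [Real.sqrt_nonneg D, Real.sqrt_nonneg (T k)]
      _ = D * T k := by
          rw [mul_pow, Real.sq_sqrt hD0, Real.sq_sqrt (hT0 k)]
  -- Summability of T
  have hGnn : (0 : ℤ × ℤ → ℝ) ≤ (fun p : ℤ × ℤ => d p.1 * b (-p.2 - p.1) ^ 2) := by
    intro p; exact mul_nonneg (hd0 _) (sq_nonneg _)
  have hG : Summable (fun p : ℤ × ℤ => d p.1 * b (-p.2 - p.1) ^ 2) := by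
    rw [summable_prod_of_nonneg hGnn]
    constructor
    · intro j
      exact (hbsK j).mul_left (d j)
    · refine Summable.congr (hD.mul_right (∑' x, b x ^ 2)) fun j => ?_
      rw [← hbtK j, ← tsum_mul_left]
  have hT : Summable T := by
    have hsw := hG.prod_symm
    have hnn : (0 : ℤ × ℤ → ℝ) ≤ (fun p : ℤ × ℤ => d p.2 * b (-p.1 - p.2) ^ 2) := by
      intro p; exact mul_nonneg (hd0 _) (sq_nonneg _)
    have := (summable_prod_of_nonneg hnn).mp (hsw.congr fun p => rfl)
    exact this.2
  -- Summability of a * R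
  have hAR : Summable (fun k => a k * R k) := by
    refine Summable.of_nonneg_of_le (fun k => mul_nonneg (ha0 k) (hR0 k)) (fun k => ?_)
      (((hA.add (hT.mul_left D)).mul_left (1/2 : ℝ)))
    have h1 : a k * R k ≤ 1/2 * (a k ^ 2 + R k ^ 2) := by nlinarith [sq_nonneg (a k - R k)]
    have h2 := hRsq k
    linarith
  refine ⟨hAR, Summable.tsum_le_of_sum_le hAR fun s => ?_⟩
  have hstep1 : ∑ k ∈ s, a k * R k = ∑' j, ∑ k ∈ s, a k * (d j * b (-k - j)) := by
    rw [Summable.tsum_finsetSum (fun k _ => (hrow1 k).mul_left (a k))]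
    exact Finset.sum_congr rfl fun k _ => tsum_mul_left.symm
  have hstep2 : ∑' j, ∑ k ∈ s, a k * (d j * b (-k - j))
      = ∑' j, d j * ∑ k ∈ s, a k * b (-k - j) := by
    refine tsum_congr fun j => ?_
    rw [Finset.mul_sum]
    exact Finset.sum_congr rfl fun k _ => by ring
  have hinner : ∀ j : ℤ, ∑ k ∈ s, a k * b (-k - j) ≤ A * B := by
    intro j
    refine finset_cs s a (fun k => b (-k - j)) ha0 (fun k => hb0 _) ?_ ?_
    · exact Summable.sum_le_tsum s (fun _ _ => sq_nonneg _) hA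
    · calc ∑ k ∈ s, b (-k - j) ^ 2 ≤ ∑' k, b (-k - j) ^ 2 :=
            Summable.sum_le_tsum s (fun _ _ => sq_nonneg _) (hbsK j)
        _ = ∑' x, b x ^ 2 := hbtK j
  have hinnernn : ∀ j : ℤ, 0 ≤ ∑ k ∈ s, a k * b (-k - j) :=
    fun j => Finset.sum_nonneg fun k _ => mul_nonneg (ha0 k) (hb0 _)
  have hlsum : Summable (fun j => d j * ∑ k ∈ s, a k * b (-k - j)) := by
    refine Summable.of_nonneg_of_le (fun j => mul_nonneg (hd0 j) (hinnernn j))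
      (fun j => mul_le_mul_of_nonneg_left (hinner j) (hd0 j)) (hD.mul_right (A * B))
  calc ∑ k ∈ s, a k * R k = ∑' j, d j * ∑ k ∈ s, a k * b (-k - j) := by
        rw [hstep1, hstep2]
    _ ≤ ∑' j, d j * (A * B) := by
        refine Summable.tsum_le_tsum (fun j => mul_le_mul_of_nonneg_left (hinner j) (hd0 j))
          hlsum (hD.mul_right (A * B))
    _ = D * (A * B) := by rw [tsum_mul_right]
    _ = D * A * B := by ring

end AiryAux


/-- The Airy group `e^{t∂ₓ³}` acting on Fourier coefficients by `f̂ₖ ↦ e^{-itk³} f̂ₖ`. -/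
noncomputable def airy (t : ℝ) (f : ℤ → ℂ) : ℤ → ℂ :=
  fun k => Complex.exp (-Complex.I * (t : ℂ) * (k : ℂ) ^ 3) * f k

/-- Fourier coefficients of the pointwise product: convolution of coefficients. -/
noncomputable def fconv (f g : ℤ → ℂ) : ℤ → ℂ := fun k => ∑' j : ℤ, f j * g (k - j)

/-- The derivative `∂ₓ` as the Fourier multiplier `ik`. -/
def dx (f : ℤ → ℂ) : ℤ → ℂ := fun k => Complex.I * (k : ℂ) * f k

/-- The real `L²(𝕋)` pairing `⟨f,g⟩ = ∫ fg`, in terms of Fourier coefficients. -/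
noncomputable def pairing (f g : ℤ → ℂ) : ℂ := ∑' k : ℤ, f k * g (-k)

/-- The `L²(𝕋)` norm in terms of Fourier coefficients. -/
noncomputable def l2norm (f : ℤ → ℂ) : ℝ := Real.sqrt (∑' k : ℤ, ‖f k‖ ^ 2)

/-- Membership in the Sobolev space `Hʳ(𝕋)`, in terms of Fourier coefficients. -/
def memH (r : ℝ) (f : ℤ → ℂ) : Prop :=
  Summable (fun k : ℤ => (1 + (k : ℝ) ^ 2) ^ r * ‖f k‖ ^ 2)

namespace AiryAux2
open AiryAux

lemma memH2_pow {f : ℤ → ℂ} (hf : memH 2 f) :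
    Summable (fun k : ℤ => (1 + (k:ℝ)^2)^2 * ‖f k‖^2) := by
  have h : Summable (fun k : ℤ => (1 + (k:ℝ)^2)^(2:ℝ) * ‖f k‖^2) := hf
  refine h.congr fun k => ?_
  rw [show ((2:ℝ)) = ((2:ℕ):ℝ) by norm_num, Real.rpow_natCast]

lemma wt2_sq {f : ℤ → ℂ} (hf : memH 2 f) :
    Summable fun k : ℤ => ((k:ℝ)^2 * ‖f k‖)^2 := by
  refine Summable.of_nonneg_of_le (fun k => sq_nonneg _) (fun k => ?_) (memH2_pow hf)
  nlinarith [sq_nonneg ((k:ℝ)), sq_nonneg (‖f k‖), sq_nonneg ((k:ℝ)^2 * ‖f k‖),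
    sq_nonneg ((k:ℝ) * ‖f k‖)]

lemma wt1_sq {f : ℤ → ℂ} (hf : memH 2 f) :
    Summable fun k : ℤ => (|(k:ℝ)| * ‖f k‖)^2 := by
  refine Summable.of_nonneg_of_le (fun k => sq_nonneg _) (fun k => ?_) (memH2_pow hf)
  have h1 : |(k:ℝ)|^2 = (k:ℝ)^2 := sq_abs _
  nlinarith [sq_nonneg ((k:ℝ)), sq_nonneg (‖f k‖), sq_nonneg ((k:ℝ)^2 * ‖f k‖)]

lemma nrm_sq {f : ℤ → ℂ} (hf : memH 2 f) :
    Summable fun k : ℤ => ‖f k‖^2 := by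
  refine Summable.of_nonneg_of_le (fun k => sq_nonneg _) (fun k => ?_) (memH2_pow hf)
  nlinarith [sq_nonneg ((k:ℝ)), sq_nonneg (‖f k‖), sq_nonneg ((k:ℝ)^2 * ‖f k‖),
    sq_nonneg ((k:ℝ)^2)]

lemma ddx_norm (f : ℤ → ℂ) (k : ℤ) : ‖dx (dx f) k‖ = (k:ℝ)^2 * ‖f k‖ := by
  have hk : ‖(k:ℂ)‖ = |(k:ℝ)| := by
    rw [← Complex.ofReal_intCast, Complex.norm_real, Real.norm_eq_abs]
  show ‖Complex.I * (k:ℂ) * (Complex.I * (k:ℂ) * f k)‖ = (k:ℝ)^2 * ‖f k‖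
  rw [norm_mul, norm_mul, norm_mul, norm_mul, Complex.norm_I, hk, ← sq_abs]
  ring

lemma airy_norm (t : ℝ) (f : ℤ → ℂ) (k : ℤ) : ‖airy t f k‖ = ‖f k‖ := by
  have h1 : (-Complex.I * (t:ℂ) * ((k:ℤ):ℂ)^3) = ((-(t * (k:ℝ)^3) : ℝ) : ℂ) * Complex.I := by
    push_cast; ring
  show ‖Complex.exp (-Complex.I * (t:ℂ) * ((k:ℤ):ℂ)^3) * f k‖ = ‖f k‖
  rw [norm_mul, h1, Complex.norm_exp_ofReal_mul_I, one_mul]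

end AiryAux2

/-- Commutator bound for the Airy group against a product, at the `H²` level:
`|⟨∂ₓ²u, vw − e^{τ∂ₓ³}[(e^{−τ∂ₓ³}v)(e^{−τ∂ₓ³}w)]⟩| ≤ c τ ‖∂ₓ²u‖ ‖∂ₓ²v‖ ‖∂ₓ²w‖`. -/
theorem airy_product_commutator_H2 :
    ∃ c : ℝ, 0 < c ∧ ∀ (τ : ℝ), 0 < τ → ∀ u v w : ℤ → ℂ,
      memH 2 u → memH 2 v → memH 2 w →
      ‖pairing (dx (dx u))
          (fun k => fconv v w k - airy τ (fconv (airy (-τ) v) (airy (-τ) w)) k)‖ ≤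
        c * τ * l2norm (dx (dx u)) * l2norm (dx (dx v)) * l2norm (dx (dx w)) := by
  classical
  open AiryAux AiryAux2 in
  -- the harmonic-type constant
  have hh2 : Summable (fun m : ℤ => ((m:ℝ)^2)⁻¹) := by
    have h := (Real.summable_one_div_int_pow (p := 2)).mpr one_lt_two
    exact h.congr fun m => by rw [one_div]
  set H : ℝ := Real.sqrt (∑' m : ℤ, ((m:ℝ)^2)⁻¹) with hHdef
  have hH0 : 0 ≤ H := Real.sqrt_nonneg _
  refine ⟨6 * (H + 1), by positivity, ?_⟩
  intro τ hτ u v w hu hv hw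
  set a : ℤ → ℝ := fun k => (k:ℝ)^2 * ‖u k‖ with hadef
  set b : ℤ → ℝ := fun k => (k:ℝ)^2 * ‖v k‖ with hbdef
  set c : ℤ → ℝ := fun k => (k:ℝ)^2 * ‖w k‖ with hcdef
  set e : ℤ → ℝ := fun k => |(k:ℝ)| * ‖v k‖ with hedef
  set d : ℤ → ℝ := fun k => |(k:ℝ)| * ‖w k‖ with hddef
  set h : ℤ → ℝ := fun m => if m = 0 then 0 else |(m:ℝ)|⁻¹ with hhdef
  have ha0 : ∀ k, 0 ≤ a k := fun k => by simp only [hadef]; positivity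
  have hb0 : ∀ k, 0 ≤ b k := fun k => by simp only [hbdef]; positivity
  have hc0 : ∀ k, 0 ≤ c k := fun k => by simp only [hcdef]; positivity
  have he0 : ∀ k, 0 ≤ e k := fun k => by simp only [hedef]; positivity
  have hd0 : ∀ k, 0 ≤ d k := fun k => by simp only [hddef]; positivity
  have hh0 : ∀ k, 0 ≤ h k := fun k => by
    simp only [hhdef]; split <;> positivity
  have hAsq : Summable fun k => a k ^ 2 := wt2_sq hu
  have hBsq : Summable fun k => b k ^ 2 := wt2_sq hv
  have hCsq : Summable fun k => c k ^ 2 := wt2_sq hw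
  have hEsq : Summable fun k => e k ^ 2 := wt1_sq hv
  have hDsq : Summable fun k => d k ^ 2 := wt1_sq hw
  have hv2 : Summable fun k => ‖v k‖ ^ 2 := nrm_sq hv
  have hw2 : Summable fun k => ‖w k‖ ^ 2 := nrm_sq hw
  have hh2sq : Summable fun m => h m ^ 2 := by
    refine hh2.congr fun m => ?_
    simp only [hhdef]
    by_cases hm : m = 0
    · subst hm; norm_num
    · rw [if_neg hm, inv_pow, sq_abs]
  -- ℓ¹ bounds on d and e
  have hdc : ∀ m : ℤ, h m * c m = d m := by
    intro m
    simp only [hhdef, hcdef, hddef]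
    by_cases hm : m = 0
    · subst hm; norm_num
    · have hm0 : |(m:ℝ)| ≠ 0 := by
        simp only [ne_eq, abs_eq_zero, Int.cast_eq_zero]; exact hm
      rw [if_neg hm, ← sq_abs, sq]
      field_simp
  have heb : ∀ m : ℤ, h m * b m = e m := by
    intro m
    simp only [hhdef, hbdef, hedef]
    by_cases hm : m = 0
    · subst hm; norm_num
    · have hm0 : |(m:ℝ)| ≠ 0 := by
        simp only [ne_eq, abs_eq_zero, Int.cast_eq_zero]; exact hm
      rw [if_neg hm, ← sq_abs, sq]
      field_simp
  have hHeq : Real.sqrt (∑' m, h m ^ 2) = H := by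
    rw [hHdef]
    congr 1
    refine tsum_congr fun m => ?_
    simp only [hhdef]
    by_cases hm : m = 0
    · subst hm; norm_num
    · rw [if_neg hm, inv_pow, sq_abs]
  have hcsd := cs_tsum hh0 hc0 hh2sq hCsq
  have hDsum : Summable d := hcsd.1.congr hdc
  have hDle : ∑' m, d m ≤ H * Real.sqrt (∑' k, c k ^ 2) := by
    calc ∑' m, d m = ∑' m, h m * c m := tsum_congr fun m => (hdc m).symm
      _ ≤ Real.sqrt (∑' m, h m ^ 2) * Real.sqrt (∑' k, c k ^ 2) := hcsd.2
      _ = H * Real.sqrt (∑' k, c k ^ 2) := by rw [hHeq]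
  have hcse := cs_tsum hh0 hb0 hh2sq hBsq
  have hEsum : Summable e := hcse.1.congr heb
  have hEle : ∑' m, e m ≤ H * Real.sqrt (∑' k, b k ^ 2) := by
    calc ∑' m, e m = ∑' m, h m * b m := tsum_congr fun m => (heb m).symm
      _ ≤ Real.sqrt (∑' m, h m ^ 2) * Real.sqrt (∑' k, b k ^ 2) := hcse.2
      _ = H * Real.sqrt (∑' k, b k ^ 2) := by rw [hHeq]
  -- summability of convolution rows
  have hvw_norm_sum : ∀ m : ℤ, Summable (fun j => ‖v j‖ * ‖w (m - j)‖) := by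
    intro m
    exact (cs_tsum (fun j => norm_nonneg _) (fun j => norm_nonneg _) hv2
      (shift_subLeft (fun x => ‖w x‖^2) hw2 m).1).1
  have hsum1 : ∀ m : ℤ, Summable (fun j => v j * w (m - j)) := fun m =>
    Summable.of_norm ((hvw_norm_sum m).congr fun j => (norm_mul _ _).symm)
  -- the key representation of the commutator
  have hg_repr : ∀ m : ℤ, (fconv v w m - airy τ (fconv (airy (-τ) v) (airy (-τ) w)) m)
      = ∑' j, (v j * w (m - j)) *
          (1 - Complex.exp (((-(3*τ) * (j:ℝ) * ((m - j : ℤ):ℝ) * (m:ℝ) : ℝ) : ℂ) * Complex.I)) := by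
    intro m
    have hphase : ∀ j : ℤ,
        Complex.exp (-Complex.I * (τ:ℂ) * (m:ℂ)^3) * (airy (-τ) v j * airy (-τ) w (m - j))
        = Complex.exp (((-(3*τ) * (j:ℝ) * ((m - j : ℤ):ℝ) * (m:ℝ) : ℝ) : ℂ) * Complex.I) *
            (v j * w (m - j)) := by
      intro j
      show Complex.exp (-Complex.I * (τ:ℂ) * (m:ℂ)^3) *
        ((Complex.exp (-Complex.I * ((-τ : ℝ):ℂ) * (j:ℂ)^3) * v j) *
         (Complex.exp (-Complex.I * ((-τ : ℝ):ℂ) * ((m - j : ℤ):ℂ)^3) * w (m - j))) = _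
      calc Complex.exp (-Complex.I * (τ:ℂ) * (m:ℂ)^3) *
            ((Complex.exp (-Complex.I * ((-τ : ℝ):ℂ) * (j:ℂ)^3) * v j) *
             (Complex.exp (-Complex.I * ((-τ : ℝ):ℂ) * ((m - j : ℤ):ℂ)^3) * w (m - j)))
          = (Complex.exp (-Complex.I * (τ:ℂ) * (m:ℂ)^3) *
             Complex.exp (-Complex.I * ((-τ : ℝ):ℂ) * (j:ℂ)^3) *
             Complex.exp (-Complex.I * ((-τ : ℝ):ℂ) * ((m - j : ℤ):ℂ)^3)) * (v j * w (m - j)) := by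
            ring
        _ = Complex.exp (-Complex.I * (τ:ℂ) * (m:ℂ)^3 + -Complex.I * ((-τ : ℝ):ℂ) * (j:ℂ)^3 +
              -Complex.I * ((-τ : ℝ):ℂ) * ((m - j : ℤ):ℂ)^3) * (v j * w (m - j)) := by
            rw [Complex.exp_add, Complex.exp_add]
        _ = Complex.exp (((-(3*τ) * (j:ℝ) * ((m - j : ℤ):ℝ) * (m:ℝ) : ℝ) : ℂ) * Complex.I) *
              (v j * w (m - j)) := by
            congr 1
            push_cast
            ring
    have hsum2 : Summable (fun j => airy (-τ) v j * airy (-τ) w (m - j)) := by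
      apply Summable.of_norm
      refine ((hvw_norm_sum m).congr fun j => ?_)
      rw [norm_mul, airy_norm, airy_norm]
    have hsum3 : Summable (fun j : ℤ =>
        Complex.exp (((-(3*τ) * (j:ℝ) * ((m - j : ℤ):ℝ) * (m:ℝ) : ℝ) : ℂ) * Complex.I) *
          (v j * w (m - j))) := by
      apply Summable.of_norm
      refine ((hvw_norm_sum m).congr fun j => ?_)
      rw [norm_mul, norm_mul, Complex.norm_exp_ofReal_mul_I, one_mul]
    have h0 : airy τ (fconv (airy (-τ) v) (airy (-τ) w)) m
        = Complex.exp (-Complex.I * (τ:ℂ) * (m:ℂ)^3) *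
            ∑' j, airy (-τ) v j * airy (-τ) w (m - j) := rfl
    have h2 : airy τ (fconv (airy (-τ) v) (airy (-τ) w)) m
        = ∑' (j : ℤ), Complex.exp (((-(3*τ) * (j:ℝ) * ((m - j : ℤ):ℝ) * (m:ℝ) : ℝ) : ℂ) * Complex.I) *
            (v j * w (m - j)) := by
      rw [h0, ← tsum_mul_left]
      exact tsum_congr hphase
    have h1 : fconv v w m = ∑' j, v j * w (m - j) := rfl
    rw [h1, h2, ← Summable.tsum_sub (hsum1 m) hsum3]
    exact tsum_congr fun j => by ring
  -- termwise bound
  have hterm_norm : ∀ m j : ℤ,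
      ‖(v j * w (m - j)) *
        (1 - Complex.exp (((-(3*τ) * (j:ℝ) * ((m - j : ℤ):ℝ) * (m:ℝ) : ℝ) : ℂ) * Complex.I))‖
      ≤ 3 * τ * (b j * d (m - j) + e j * c (m - j)) := by
    intro m j
    have h2 := norm_one_sub_exp (-(3*τ) * (j:ℝ) * ((m - j : ℤ):ℝ) * (m:ℝ))
    have habs : |(-(3*τ) * (j:ℝ) * ((m - j : ℤ):ℝ) * (m:ℝ))|
        = 3*τ*(|(j:ℝ)| * (|((m - j : ℤ):ℝ)| * |(m:ℝ)|)) := by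
      rw [abs_mul, abs_mul, abs_mul, abs_neg, abs_of_pos (by positivity : (0:ℝ) < 3*τ)]
      ring
    have htri : |(m:ℝ)| ≤ |(j:ℝ)| + |((m - j : ℤ):ℝ)| := by
      have hm : (m:ℝ) = (j:ℝ) + ((m - j : ℤ):ℝ) := by push_cast; ring
      rw [hm]; exact abs_add_le _ _
    have hmain : ‖v j‖ * ‖w (m - j)‖ * |(-(3*τ) * (j:ℝ) * ((m - j : ℤ):ℝ) * (m:ℝ))|
        ≤ 3 * τ * (b j * d (m - j) + e j * c (m - j)) := by
      rw [habs]
      simp only [hbdef, hcdef, hddef, hedef]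
      have hsq1 : (j:ℝ)^2 = |(j:ℝ)| * |(j:ℝ)| := by rw [← abs_mul, abs_of_nonneg (by nlinarith [sq_nonneg ((j:ℝ))] : (0:ℝ) ≤ (j:ℝ)*(j:ℝ))]; ring_nf
      have hsq2 : ((m - j : ℤ):ℝ)^2 = |((m - j : ℤ):ℝ)| * |((m - j : ℤ):ℝ)| := by
        rw [← abs_mul, abs_of_nonneg (by nlinarith [sq_nonneg (((m - j : ℤ):ℝ))] : (0:ℝ) ≤ ((m - j : ℤ):ℝ)*((m - j : ℤ):ℝ))]; ring_nf
      rw [hsq1, hsq2]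
      nlinarith [mul_le_mul_of_nonneg_left htri
        (by positivity : (0:ℝ) ≤ 3*τ*(‖v j‖ * ‖w (m - j)‖ * (|(j:ℝ)| * |((m - j : ℤ):ℝ)|))),
        abs_nonneg ((j:ℝ)), abs_nonneg (((m - j : ℤ):ℝ)), abs_nonneg ((m:ℝ)),
        norm_nonneg (v j), norm_nonneg (w (m - j)), hτ.le]
    calc ‖(v j * w (m - j)) *
        (1 - Complex.exp (((-(3*τ) * (j:ℝ) * ((m - j : ℤ):ℝ) * (m:ℝ) : ℝ) : ℂ) * Complex.I))‖
        = ‖v j‖ * ‖w (m - j)‖ *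
          ‖1 - Complex.exp (((-(3*τ) * (j:ℝ) * ((m - j : ℤ):ℝ) * (m:ℝ) : ℝ) : ℂ) * Complex.I)‖ := by
          rw [norm_mul, norm_mul]
      _ ≤ ‖v j‖ * ‖w (m - j)‖ * |(-(3*τ) * (j:ℝ) * ((m - j : ℤ):ℝ) * (m:ℝ))| := by
          exact mul_le_mul_of_nonneg_left h2 (by positivity)
      _ ≤ 3 * τ * (b j * d (m - j) + e j * c (m - j)) := hmain
  -- row majorant summability
  have hbd : ∀ m : ℤ, Summable (fun j => b j * d (m - j)) := fun m =>
    (cs_tsum hb0 (fun j => hd0 _) hBsq (shift_subLeft (fun x => d x ^ 2) hDsq m).1).1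
  have hec : ∀ m : ℤ, Summable (fun j => e j * c (m - j)) := fun m =>
    (cs_tsum he0 (fun j => hc0 _) hEsq (shift_subLeft (fun x => c x ^ 2) hCsq m).1).1
  have hW_sum : ∀ m : ℤ, Summable (fun j => 3 * τ * (b j * d (m - j) + e j * c (m - j))) :=
    fun m => ((hbd m).add (hec m)).mul_left (3 * τ)
  -- swap the roles in the first row sum
  have hswap : ∀ m : ℤ, ∑' j, b j * d (m - j) = ∑' j, d j * b (m - j) := by
    intro m
    have h1 := (Equiv.subLeft m).tsum_eq (fun j => b j * d (m - j))
    rw [← h1]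
    refine tsum_congr fun j => ?_
    rw [Equiv.subLeft_apply, sub_sub_cancel, mul_comm]
  -- row bound
  have hrow : ∀ m : ℤ, ‖fconv v w m - airy τ (fconv (airy (-τ) v) (airy (-τ) w)) m‖
      ≤ 3 * τ * (∑' j, d j * b (m - j)) + 3 * τ * (∑' j, e j * c (m - j)) := by
    intro m
    rw [hg_repr m]
    have hnorm_sum : Summable (fun j => ‖(v j * w (m - j)) *
        (1 - Complex.exp (((-(3*τ) * (j:ℝ) * ((m - j : ℤ):ℝ) * (m:ℝ) : ℝ) : ℂ) * Complex.I))‖) :=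
      Summable.of_nonneg_of_le (fun j => norm_nonneg _) (fun j => hterm_norm m j) (hW_sum m)
    calc ‖∑' j, (v j * w (m - j)) *
          (1 - Complex.exp (((-(3*τ) * (j:ℝ) * ((m - j : ℤ):ℝ) * (m:ℝ) : ℝ) : ℂ) * Complex.I))‖
        ≤ ∑' j, ‖(v j * w (m - j)) *
          (1 - Complex.exp (((-(3*τ) * (j:ℝ) * ((m - j : ℤ):ℝ) * (m:ℝ) : ℝ) : ℂ) * Complex.I))‖ :=
          norm_tsum_le_tsum_norm hnorm_sum
      _ ≤ ∑' j, 3 * τ * (b j * d (m - j) + e j * c (m - j)) :=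
          Summable.tsum_le_tsum (fun j => hterm_norm m j) hnorm_sum (hW_sum m)
      _ = 3 * τ * (∑' j, b j * d (m - j)) + 3 * τ * (∑' j, e j * c (m - j)) := by
          rw [tsum_mul_left, Summable.tsum_add (hbd m) (hec m), mul_add]
      _ = 3 * τ * (∑' j, d j * b (m - j)) + 3 * τ * (∑' j, e j * c (m - j)) := by
          rw [hswap m]
  -- Young's inequality applications
  have hY1 := young_cs ha0 hb0 hd0 hAsq hBsq hDsum
  have hY2 := young_cs ha0 hc0 he0 hAsq hCsq hEsum
  set A := Real.sqrt (∑' k, a k ^ 2) with hAdef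
  set B := Real.sqrt (∑' k, b k ^ 2) with hBdef2
  set C := Real.sqrt (∑' k, c k ^ 2) with hCdef2
  have hA0 : 0 ≤ A := Real.sqrt_nonneg _
  have hB0 : 0 ≤ B := Real.sqrt_nonneg _
  have hC0 : 0 ≤ C := Real.sqrt_nonneg _
  -- identify l2norms
  have hl2u : l2norm (dx (dx u)) = A := by
    rw [hAdef]; unfold l2norm; congr 1
    exact tsum_congr fun k => by rw [ddx_norm, hadef]
  have hl2v : l2norm (dx (dx v)) = B := by
    rw [hBdef2]; unfold l2norm; congr 1
    exact tsum_congr fun k => by rw [ddx_norm, hbdef]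
  have hl2w : l2norm (dx (dx w)) = C := by
    rw [hCdef2]; unfold l2norm; congr 1
    exact tsum_congr fun k => by rw [ddx_norm, hcdef]
  -- pointwise pairing-term bound
  have hptwise : ∀ k : ℤ, ‖dx (dx u) k *
      (fconv v w (-k) - airy τ (fconv (airy (-τ) v) (airy (-τ) w)) (-k))‖
      ≤ 3 * τ * (a k * ∑' j, d j * b (-k - j)) + 3 * τ * (a k * ∑' j, e j * c (-k - j)) := by
    intro k
    rw [norm_mul, ddx_norm]
    calc (k:ℝ)^2 * ‖u k‖ *
        ‖fconv v w (-k) - airy τ (fconv (airy (-τ) v) (airy (-τ) w)) (-k)‖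
        ≤ a k * (3 * τ * (∑' j, d j * b (-k - j)) + 3 * τ * (∑' j, e j * c (-k - j))) :=
          mul_le_mul_of_nonneg_left (hrow (-k)) (ha0 k)
      _ = 3 * τ * (a k * ∑' j, d j * b (-k - j)) + 3 * τ * (a k * ∑' j, e j * c (-k - j)) := by
          ring
  have hmajsum : Summable (fun k : ℤ =>
      3 * τ * (a k * ∑' j, d j * b (-k - j)) + 3 * τ * (a k * ∑' j, e j * c (-k - j))) :=
    (hY1.1.mul_left (3*τ)).add (hY2.1.mul_left (3*τ))
  have hnormsum : Summable (fun k : ℤ => ‖dx (dx u) k *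
      (fconv v w (-k) - airy τ (fconv (airy (-τ) v) (airy (-τ) w)) (-k))‖) :=
    Summable.of_nonneg_of_le (fun k => norm_nonneg _) hptwise hmajsum
  -- final chain
  rw [hl2u, hl2v, hl2w]
  have hpair : pairing (dx (dx u))
      (fun k => fconv v w k - airy τ (fconv (airy (-τ) v) (airy (-τ) w)) k)
      = ∑' k, dx (dx u) k *
        (fconv v w (-k) - airy τ (fconv (airy (-τ) v) (airy (-τ) w)) (-k)) := rfl
  rw [hpair]
  calc ‖∑' k, dx (dx u) k *
        (fconv v w (-k) - airy τ (fconv (airy (-τ) v) (airy (-τ) w)) (-k))‖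
      ≤ ∑' k, ‖dx (dx u) k *
        (fconv v w (-k) - airy τ (fconv (airy (-τ) v) (airy (-τ) w)) (-k))‖ :=
        norm_tsum_le_tsum_norm hnormsum
    _ ≤ ∑' k, (3 * τ * (a k * ∑' j, d j * b (-k - j)) + 3 * τ * (a k * ∑' j, e j * c (-k - j))) :=
        Summable.tsum_le_tsum hptwise hnormsum hmajsum
    _ = 3 * τ * (∑' k, a k * ∑' j, d j * b (-k - j))
        + 3 * τ * (∑' k, a k * ∑' j, e j * c (-k - j)) := by
        rw [Summable.tsum_add (hY1.1.mul_left (3*τ)) (hY2.1.mul_left (3*τ)), tsum_mul_left, tsum_mul_left]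
    _ ≤ 3 * τ * ((∑' j, d j) * A * B) + 3 * τ * ((∑' j, e j) * A * C) := by
        have h1 := hY1.2
        have h2 := hY2.2
        have hτ3 : (0:ℝ) ≤ 3 * τ := by positivity
        exact add_le_add (mul_le_mul_of_nonneg_left h1 hτ3) (mul_le_mul_of_nonneg_left h2 hτ3)
    _ ≤ 3 * τ * ((H * C) * A * B) + 3 * τ * ((H * B) * A * C) := by
        have hτ3 : (0:ℝ) ≤ 3 * τ := by positivity
        refine add_le_add (mul_le_mul_of_nonneg_left ?_ hτ3) (mul_le_mul_of_nonneg_left ?_ hτ3)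
        · exact mul_le_mul_of_nonneg_right (mul_le_mul_of_nonneg_right hDle hA0) hB0
        · exact mul_le_mul_of_nonneg_right (mul_le_mul_of_nonneg_right hEle hA0) hC0
    _ = 6 * H * τ * A * B * C := by ring
    _ ≤ 6 * (H + 1) * τ * A * B * C := by nlinarith [mul_nonneg (mul_nonneg hA0 hB0) hC0, hτ.le]
end

section
/- For u, v ∈ H²(𝕋) and τ > 0, |⟨u, (∂ₓv)² − e^{τ∂ₓ³}(e^{−τ∂ₓ³}∂ₓv)²⟩_{L²}| ≤ c·τ·‖∂ₓ²u‖_{L²}·‖∂ₓ²v‖_{L²}² for a constant c independent of τ, u, v. -/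
lemma norm_exp_real_mul_I_sub_one_le (θ : ℝ) :
    ‖Complex.exp ((θ : ℂ) * Complex.I) - 1‖ ≤ |θ| := by
  have h1 : ‖Complex.exp ((θ : ℂ) * Complex.I) - 1‖ ^ 2 =
      (Real.cos θ - 1) ^ 2 + Real.sin θ ^ 2 := by
    rw [Complex.exp_mul_I]
    rw [Complex.sq_norm, Complex.normSq_apply]
    simp [Complex.cos_ofReal_re, Complex.sin_ofReal_re]
    ring
  have hcos : Real.cos θ = 1 - 2 * Real.sin (θ / 2) ^ 2 := by
    have h := Real.cos_two_mul' (θ / 2)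
    have h2 := Real.sin_sq_add_cos_sq (θ / 2)
    rw [show 2 * (θ / 2) = θ by ring] at h
    nlinarith
  have hs := Real.sin_sq_le_sq (x := θ / 2)
  have hps := Real.sin_sq_add_cos_sq θ
  have h2 : ‖Complex.exp ((θ : ℂ) * Complex.I) - 1‖ ^ 2 ≤ θ ^ 2 := by
    rw [h1]; nlinarith
  nlinarith [norm_nonneg (Complex.exp ((θ : ℂ) * Complex.I) - 1), abs_nonneg θ, sq_abs θ]

lemma tsum_mul_le_sqrt_mul_sqrt (x y : ℤ → ℝ) (hx0 : ∀ k, 0 ≤ x k) (hy0 : ∀ k, 0 ≤ y k)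
    (hx : Summable (fun k => x k ^ 2)) (hy : Summable (fun k => y k ^ 2)) :
    ∑' k, x k * y k ≤ Real.sqrt (∑' k, x k ^ 2) * Real.sqrt (∑' k, y k ^ 2) := by
  have hxy : Summable (fun k => x k * y k) := by
    refine Summable.of_nonneg_of_le (fun k => mul_nonneg (hx0 k) (hy0 k))
      (fun k => ?_) ((hx.add hy).div_const 2)
    nlinarith [sq_nonneg (x k - y k)]
  refine Summable.tsum_le_of_sum_le hxy fun s => ?_
  have h1 : (∑ k ∈ s, x k * y k) ^ 2 ≤ (∑ k ∈ s, x k ^ 2) * ∑ k ∈ s, y k ^ 2 :=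
    Finset.sum_mul_sq_le_sq_mul_sq s x y
  have h2 : ∑ k ∈ s, x k ^ 2 ≤ ∑' k, x k ^ 2 := Summable.sum_le_tsum s (fun k _ => sq_nonneg _) hx
  have h3 : ∑ k ∈ s, y k ^ 2 ≤ ∑' k, y k ^ 2 := Summable.sum_le_tsum s (fun k _ => sq_nonneg _) hy
  have hs : 0 ≤ ∑ k ∈ s, x k * y k :=
    Finset.sum_nonneg fun k _ => mul_nonneg (hx0 k) (hy0 k)
  have h4 : (∑ k ∈ s, x k * y k) ≤ Real.sqrt ((∑' k, x k ^ 2) * (∑' k, y k ^ 2)) := by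
    rw [Real.le_sqrt hs (mul_nonneg (tsum_nonneg fun _ => sq_nonneg _)
      (tsum_nonneg fun _ => sq_nonneg _))]
    calc (∑ k ∈ s, x k * y k) ^ 2 ≤ (∑ k ∈ s, x k ^ 2) * ∑ k ∈ s, y k ^ 2 := h1
      _ ≤ (∑' k, x k ^ 2) * (∑' k, y k ^ 2) := by
          apply mul_le_mul h2 h3 (Finset.sum_nonneg fun k _ => sq_nonneg _)
            (tsum_nonneg fun _ => sq_nonneg _)
  rwa [Real.sqrt_mul (tsum_nonneg fun _ => sq_nonneg _)] at h4

lemma norm_dx (f : ℤ → ℂ) (k : ℤ) : ‖dx f k‖ = |(k : ℝ)| * ‖f k‖ := by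
  simp [dx, norm_mul, Complex.norm_intCast]

lemma airy_norm (t : ℝ) (f : ℤ → ℂ) (k : ℤ) : ‖airy t f k‖ = ‖f k‖ := by
  unfold airy
  rw [norm_mul]
  have h : -Complex.I * (t : ℂ) * (k : ℂ) ^ 3 = ((-(t * (k : ℝ) ^ 3) : ℝ) : ℂ) * Complex.I := by
    push_cast; ring
  rw [h, Complex.norm_exp_ofReal_mul_I, one_mul]

lemma airy_diff_eq (τ : ℝ) (w : ℤ → ℂ) (k : ℤ)
    (h1n : Summable fun j : ℤ => ‖w j‖ * ‖w (k - j)‖) :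
    fconv w w k - airy τ (fconv (airy (-τ) w) (airy (-τ) w)) k
      = ∑' j : ℤ, (1 - Complex.exp
          (((-(3 * τ * (j : ℝ) * ((k : ℝ) - (j : ℝ)) * (k : ℝ)) : ℝ) : ℂ) * Complex.I))
          * (w j * w (k - j)) := by
  have h1 : Summable fun j : ℤ => w j * w (k - j) :=
    Summable.of_norm (by simpa [norm_mul] using h1n)
  have h2 : Summable fun j : ℤ => Complex.exp (-Complex.I * (τ : ℂ) * (k : ℂ) ^ 3) *
      (airy (-τ) w j * airy (-τ) w (k - j)) := by
    apply Summable.of_norm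
    have : ∀ j : ℤ, ‖Complex.exp (-Complex.I * (τ : ℂ) * (k : ℂ) ^ 3) *
        (airy (-τ) w j * airy (-τ) w (k - j))‖ = ‖w j‖ * ‖w (k - j)‖ := by
      intro j
      rw [norm_mul, norm_mul, airy_norm, airy_norm]
      have h : -Complex.I * (τ : ℂ) * (k : ℂ) ^ 3
          = ((-(τ * (k : ℝ) ^ 3) : ℝ) : ℂ) * Complex.I := by push_cast; ring
      rw [h, Complex.norm_exp_ofReal_mul_I, one_mul]
    exact h1n.congr fun j => (this j).symm
  have e1 : airy τ (fconv (airy (-τ) w) (airy (-τ) w)) k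
      = ∑' j : ℤ, Complex.exp (-Complex.I * (τ : ℂ) * (k : ℂ) ^ 3) *
          (airy (-τ) w j * airy (-τ) w (k - j)) := by
    simp only [airy, fconv]
    rw [tsum_mul_left]
  rw [e1, fconv]
  rw [← Summable.tsum_sub h1 h2]
  apply tsum_congr
  intro j
  have key : Complex.exp (-Complex.I * (τ : ℂ) * (k : ℂ) ^ 3) *
      (airy (-τ) w j * airy (-τ) w (k - j))
      = Complex.exp
          (((-(3 * τ * (j : ℝ) * ((k : ℝ) - (j : ℝ)) * (k : ℝ)) : ℝ) : ℂ) * Complex.I)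
          * (w j * w (k - j)) := by
    simp only [airy]
    rw [show Complex.exp (-Complex.I * (τ : ℂ) * (k : ℂ) ^ 3) *
        (Complex.exp (-Complex.I * ((-τ : ℝ) : ℂ) * (j : ℂ) ^ 3) * w j *
          (Complex.exp (-Complex.I * ((-τ : ℝ) : ℂ) * ((k - j : ℤ) : ℂ) ^ 3) * w (k - j)))
        = Complex.exp (-Complex.I * (τ : ℂ) * (k : ℂ) ^ 3 +
            (-Complex.I * ((-τ : ℝ) : ℂ) * (j : ℂ) ^ 3 +
             -Complex.I * ((-τ : ℝ) : ℂ) * ((k - j : ℤ) : ℂ) ^ 3)) * (w j * w (k - j)) by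
          rw [Complex.exp_add, Complex.exp_add]; ring]
    congr 2
    push_cast
    ring
  rw [key]
  ring

/-- `|⟨u, (∂ₓv)² − e^{τ∂ₓ³}(e^{−τ∂ₓ³}∂ₓv)²⟩| ≤ c τ ‖∂ₓ²u‖ ‖∂ₓ²v‖²`. -/
theorem airy_square_commutator_H2 :
    ∃ c : ℝ, 0 < c ∧ ∀ (τ : ℝ), 0 < τ → ∀ u v : ℤ → ℂ,
      memH 2 u → memH 2 v →
      ‖pairing u
          (fun k => fconv (dx v) (dx v) k
            - airy τ (fconv (airy (-τ) (dx v)) (airy (-τ) (dx v))) k)‖ ≤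
        c * τ * l2norm (dx (dx u)) * l2norm (dx (dx v)) ^ 2 := by
  classical
  refine ⟨3 * (Real.sqrt (∑' k : ℤ, (1 / |(k : ℝ)|) ^ 2) + 1), by positivity, ?_⟩
  intro τ hτ u v hu hv
  have hpow : ∀ t : ℝ, t ^ (2 : ℝ) = t ^ 2 := fun t => by
    rw [show (2 : ℝ) = ((2 : ℕ) : ℝ) by norm_num, Real.rpow_natCast]
  have hu' : Summable fun k : ℤ => (1 + (k : ℝ) ^ 2) ^ 2 * ‖u k‖ ^ 2 :=
    hu.congr fun k => by rw [hpow]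
  have hv' : Summable fun k : ℤ => (1 + (k : ℝ) ^ 2) ^ 2 * ‖v k‖ ^ 2 :=
    hv.congr fun k => by rw [hpow]
  set x : ℤ → ℝ := fun k => 1 / |(k : ℝ)| with hxdef
  set y : ℤ → ℝ := fun k => ‖dx (dx u) k‖ with hydef
  set b : ℤ → ℝ := fun k => ‖dx (dx v) k‖ with hbdef
  have hx0 : ∀ k, 0 ≤ x k := fun k => by rw [hxdef]; positivity
  have hy0 : ∀ k, 0 ≤ y k := fun k => norm_nonneg _
  have hb0 : ∀ k, 0 ≤ b k := fun k => norm_nonneg _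
  have hy_eq : ∀ k, y k = (k : ℝ) ^ 2 * ‖u k‖ := by
    intro k
    rw [hydef]
    show ‖dx (dx u) k‖ = _
    rw [norm_dx, norm_dx, ← mul_assoc, ← sq, sq_abs]
  have hb_eq : ∀ k : ℤ, b k = |(k : ℝ)| * ‖dx v k‖ := fun k => norm_dx (dx v) k
  have hb_sq : ∀ k, b k = (k : ℝ) ^ 2 * ‖v k‖ := by
    intro k
    rw [hbdef]
    show ‖dx (dx v) k‖ = _
    rw [norm_dx, norm_dx, ← mul_assoc, ← sq, sq_abs]
  have hy2 : Summable fun k => y k ^ 2 := by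
    refine Summable.of_nonneg_of_le (fun k => sq_nonneg _) (fun k => ?_) hu'
    rw [hy_eq]
    nlinarith [sq_nonneg (k : ℝ), sq_nonneg ‖u k‖, mul_nonneg (sq_nonneg (k : ℝ)) (sq_nonneg ‖u k‖)]
  have hb2 : Summable fun k => b k ^ 2 := by
    refine Summable.of_nonneg_of_le (fun k => sq_nonneg _) (fun k => ?_) hv'
    rw [hb_sq]
    nlinarith [sq_nonneg (k : ℝ), sq_nonneg ‖v k‖, mul_nonneg (sq_nonneg (k : ℝ)) (sq_nonneg ‖v k‖)]
  have hW2 : Summable fun k => ‖dx v k‖ ^ 2 := by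
    refine Summable.of_nonneg_of_le (fun k => sq_nonneg _) (fun k => ?_) hv'
    rw [norm_dx]
    nlinarith [sq_nonneg (k : ℝ), sq_nonneg ‖v k‖, sq_abs (k : ℝ),
      mul_nonneg (sq_nonneg (k : ℝ)) (sq_nonneg ‖v k‖),
      mul_nonneg (mul_nonneg (sq_nonneg (k : ℝ)) (sq_nonneg (k : ℝ))) (sq_nonneg ‖v k‖)]
  have hx2 : Summable fun k => x k ^ 2 := by
    refine ((Real.summable_one_div_int_pow (p := 2)).mpr one_lt_two).congr fun k => ?_
    rw [hxdef]
    show 1 / (k : ℝ) ^ 2 = (1 / |(k : ℝ)|) ^ 2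
    rw [div_pow, one_pow, sq_abs]
  have hxy : ∀ k : ℤ, |(k : ℝ)| * ‖u k‖ = x k * y k := by
    intro k
    rcases eq_or_ne k 0 with rfl | h
    · simp [hxdef, hy_eq]
    · have hk : |(k : ℝ)| ≠ 0 := by
        simp [abs_ne_zero, Int.cast_ne_zero, h]
      rw [hxdef, hy_eq]
      show |(k : ℝ)| * ‖u k‖ = 1 / |(k : ℝ)| * ((k : ℝ) ^ 2 * ‖u k‖)
      rw [← sq_abs (k : ℝ)]
      field_simp
  set Sv : ℝ := ∑' k, b k ^ 2 with hSvdef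
  have hSv0 : 0 ≤ Sv := tsum_nonneg fun _ => sq_nonneg _
  -- shifted summability
  have hWshift : ∀ k : ℤ, Summable fun j => ‖dx v (k - j)‖ ^ 2 := by
    intro k
    exact ((Equiv.subLeft k).summable_iff (f := fun j => ‖dx v j‖ ^ 2)).mpr hW2
  have hbshift : ∀ k : ℤ, Summable fun j => b (k - j) ^ 2 := by
    intro k
    exact ((Equiv.subLeft k).summable_iff (f := fun j => b j ^ 2)).mpr hb2
  have hbshift_eq : ∀ k : ℤ, ∑' j, b (k - j) ^ 2 = Sv := by
    intro k
    exact (Equiv.subLeft k).tsum_eq (fun j => b j ^ 2)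
  have h1n : ∀ k : ℤ, Summable fun j : ℤ => ‖dx v j‖ * ‖dx v (k - j)‖ := by
    intro k
    refine Summable.of_nonneg_of_le (fun j => mul_nonneg (norm_nonneg _) (norm_nonneg _))
      (fun j => ?_) ((hW2.add (hWshift k)).div_const 2)
    nlinarith [sq_nonneg (‖dx v j‖ - ‖dx v (k - j)‖)]
  have hbconv : ∀ k : ℤ, Summable fun j => b j * b (k - j) := by
    intro k
    refine Summable.of_nonneg_of_le (fun j => mul_nonneg (hb0 j) (hb0 _))
      (fun j => ?_) ((hb2.add (hbshift k)).div_const 2)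
    nlinarith [sq_nonneg (b j - b (k - j))]
  have hconv : ∀ k : ℤ, ∑' j, b j * b (k - j) ≤ Sv := by
    intro k
    calc ∑' j, b j * b (k - j) ≤ ∑' j, (b j ^ 2 + b (k - j) ^ 2) / 2 := by
          refine Summable.tsum_le_tsum (fun j => ?_) (hbconv k) ((hb2.add (hbshift k)).div_const 2)
          nlinarith [sq_nonneg (b j - b (k - j))]
      _ = Sv := by
          rw [tsum_div_const, Summable.tsum_add hb2 (hbshift k), hbshift_eq k, ← hSvdef]
          ring
  -- bound on the commutator coefficients
  have hFbound : ∀ k : ℤ, ‖fconv (dx v) (dx v) k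
      - airy τ (fconv (airy (-τ) (dx v)) (airy (-τ) (dx v))) k‖ ≤ 3 * τ * |(k : ℝ)| * Sv := by
    intro k
    rw [airy_diff_eq τ (dx v) k (h1n k)]
    have hpt : ∀ j : ℤ, ‖(1 - Complex.exp
        (((-(3 * τ * (j : ℝ) * ((k : ℝ) - (j : ℝ)) * (k : ℝ)) : ℝ) : ℂ) * Complex.I))
        * (dx v j * dx v (k - j))‖ ≤ 3 * τ * |(k : ℝ)| * (b j * b (k - j)) := by
      intro j
      have hone : ‖1 - Complex.exp
          (((-(3 * τ * (j : ℝ) * ((k : ℝ) - (j : ℝ)) * (k : ℝ)) : ℝ) : ℂ) * Complex.I)‖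
          ≤ |(-(3 * τ * (j : ℝ) * ((k : ℝ) - (j : ℝ)) * (k : ℝ)) : ℝ)| := by
        rw [norm_sub_rev]
        exact norm_exp_real_mul_I_sub_one_le _
      calc ‖(1 - Complex.exp
          (((-(3 * τ * (j : ℝ) * ((k : ℝ) - (j : ℝ)) * (k : ℝ)) : ℝ) : ℂ) * Complex.I))
          * (dx v j * dx v (k - j))‖
          = ‖1 - Complex.exp
            (((-(3 * τ * (j : ℝ) * ((k : ℝ) - (j : ℝ)) * (k : ℝ)) : ℝ) : ℂ) * Complex.I)‖
            * (‖dx v j‖ * ‖dx v (k - j)‖) := by rw [norm_mul, norm_mul]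
        _ ≤ |(-(3 * τ * (j : ℝ) * ((k : ℝ) - (j : ℝ)) * (k : ℝ)) : ℝ)|
            * (‖dx v j‖ * ‖dx v (k - j)‖) := by
            apply mul_le_mul_of_nonneg_right hone
              (mul_nonneg (norm_nonneg _) (norm_nonneg _))
        _ = 3 * τ * |(k : ℝ)| * (b j * b (k - j)) := by
            rw [hb_eq j, hb_eq (k - j)]
            push_cast
            rw [abs_neg, abs_mul, abs_mul, abs_mul, abs_mul, abs_of_pos hτ,
              show |(3 : ℝ)| = 3 from by norm_num]
            ring
    have hsn : Summable fun j : ℤ => ‖(1 - Complex.exp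
        (((-(3 * τ * (j : ℝ) * ((k : ℝ) - (j : ℝ)) * (k : ℝ)) : ℝ) : ℂ) * Complex.I))
        * (dx v j * dx v (k - j))‖ :=
      Summable.of_nonneg_of_le (fun j => norm_nonneg _) hpt ((hbconv k).mul_left _)
    calc ‖∑' j : ℤ, (1 - Complex.exp
        (((-(3 * τ * (j : ℝ) * ((k : ℝ) - (j : ℝ)) * (k : ℝ)) : ℝ) : ℂ) * Complex.I))
        * (dx v j * dx v (k - j))‖
        ≤ ∑' j : ℤ, ‖(1 - Complex.exp
          (((-(3 * τ * (j : ℝ) * ((k : ℝ) - (j : ℝ)) * (k : ℝ)) : ℝ) : ℂ) * Complex.I))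
          * (dx v j * dx v (k - j))‖ := norm_tsum_le_tsum_norm hsn
      _ ≤ ∑' j : ℤ, 3 * τ * |(k : ℝ)| * (b j * b (k - j)) :=
          Summable.tsum_le_tsum hpt hsn ((hbconv k).mul_left _)
      _ = 3 * τ * |(k : ℝ)| * ∑' j, b j * b (k - j) := tsum_mul_left
      _ ≤ 3 * τ * |(k : ℝ)| * Sv := by
          apply mul_le_mul_of_nonneg_left (hconv k) (by positivity)
  -- outer sum
  simp only [pairing]
  have houter_pt : ∀ k : ℤ, ‖u k * (fconv (dx v) (dx v) (-k)
      - airy τ (fconv (airy (-τ) (dx v)) (airy (-τ) (dx v))) (-k))‖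
      ≤ 3 * τ * Sv * (x k * y k) := by
    intro k
    rw [norm_mul]
    calc ‖u k‖ * ‖fconv (dx v) (dx v) (-k)
        - airy τ (fconv (airy (-τ) (dx v)) (airy (-τ) (dx v))) (-k)‖
        ≤ ‖u k‖ * (3 * τ * |((-k : ℤ) : ℝ)| * Sv) :=
          mul_le_mul_of_nonneg_left (hFbound (-k)) (norm_nonneg _)
      _ = 3 * τ * Sv * (x k * y k) := by
          rw [← hxy k]
          push_cast
          rw [abs_neg]
          ring
  have hxysum : Summable fun k => x k * y k := by
    refine Summable.of_nonneg_of_le (fun k => mul_nonneg (hx0 k) (hy0 k))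
      (fun k => ?_) ((hx2.add hy2).div_const 2)
    nlinarith [sq_nonneg (x k - y k)]
  have hsouter : Summable fun k : ℤ => ‖u k * (fconv (dx v) (dx v) (-k)
      - airy τ (fconv (airy (-τ) (dx v)) (airy (-τ) (dx v))) (-k))‖ :=
    Summable.of_nonneg_of_le (fun k => norm_nonneg _) houter_pt (hxysum.mul_left _)
  have hl2u : l2norm (dx (dx u)) = Real.sqrt (∑' k, y k ^ 2) := by
    simp only [l2norm, hydef]
  have hl2v : l2norm (dx (dx v)) ^ 2 = Sv := by
    simp only [l2norm, hbdef, hSvdef]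
    exact Real.sq_sqrt (tsum_nonneg fun _ => sq_nonneg _)
  calc ‖∑' k : ℤ, u k * (fconv (dx v) (dx v) (-k)
      - airy τ (fconv (airy (-τ) (dx v)) (airy (-τ) (dx v))) (-k))‖
      ≤ ∑' k : ℤ, ‖u k * (fconv (dx v) (dx v) (-k)
        - airy τ (fconv (airy (-τ) (dx v)) (airy (-τ) (dx v))) (-k))‖ :=
        norm_tsum_le_tsum_norm hsouter
    _ ≤ ∑' k : ℤ, 3 * τ * Sv * (x k * y k) :=
        Summable.tsum_le_tsum houter_pt hsouter (hxysum.mul_left _)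
    _ = 3 * τ * Sv * ∑' k, x k * y k := tsum_mul_left
    _ ≤ 3 * τ * Sv * (Real.sqrt (∑' k, x k ^ 2) * Real.sqrt (∑' k, y k ^ 2)) := by
        apply mul_le_mul_of_nonneg_left
          (tsum_mul_le_sqrt_mul_sqrt x y hx0 hy0 hx2 hy2) (by positivity)
    _ ≤ 3 * (Real.sqrt (∑' k : ℤ, (1 / |(k : ℝ)|) ^ 2) + 1) * τ
        * l2norm (dx (dx u)) * l2norm (dx (dx v)) ^ 2 := by
        rw [hl2u, hl2v]
        have hxx : (∑' k : ℤ, x k ^ 2) = ∑' k : ℤ, (1 / |(k : ℝ)|) ^ 2 := by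
          simp only [hxdef]
        rw [hxx]
        nlinarith [mul_nonneg (mul_nonneg hτ.le (Real.sqrt_nonneg (∑' k, y k ^ 2))) hSv0,
          Real.sqrt_nonneg (∑' k : ℤ, (1 / |(k : ℝ)|) ^ 2),
          Real.sqrt_nonneg (∑' k, y k ^ 2), hSv0, hτ.le]
end

section
/- For u, v ∈ H¹(𝕋) with additionally ∂ₓ²v ∈ L², and τ > 0, the quantity I(u,v,v) := |⟨u, v² − e^{τ∂ₓ³}(e^{−τ∂ₓ³}v)²⟩_{L²}| satisfies I(u,v,v) ≤ c·τ·‖∂ₓv‖_{L²}²·‖∂ₓ²u‖_{L²} provided u ∈ H², for a constant c independent of τ. -/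
lemma norm_one_sub_exp (θ : ℝ) : ‖1 - Complex.exp ((θ:ℂ) * Complex.I)‖ ≤ 2 * |θ| := by
  have habs : ‖(θ:ℂ) * Complex.I‖ = |θ| := by
    simp [Complex.norm_real]
  rcases le_or_gt (|θ|) 1 with h | h
  · have h2 := Complex.norm_exp_sub_one_le (x := (θ:ℂ) * Complex.I) (by rw [habs]; exact h)
    rw [habs] at h2
    calc ‖1 - Complex.exp ((θ:ℂ) * Complex.I)‖
        = ‖Complex.exp ((θ:ℂ)*Complex.I) - 1‖ := by
          rw [norm_sub_rev]
      _ ≤ 2 * |θ| := h2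
  · have h2 : ‖1 - Complex.exp ((θ:ℂ) * Complex.I)‖ ≤ ‖(1:ℂ)‖ + ‖Complex.exp ((θ:ℂ)*Complex.I)‖ :=
      norm_sub_le _ _
    have h3 : ‖Complex.exp ((θ:ℂ)*Complex.I)‖ = 1 := Complex.norm_exp_ofReal_mul_I θ
    have h4 : ‖(1:ℂ)‖ = 1 := by simp
    nlinarith [abs_nonneg θ]

lemma summable_mul_of_sq {f g : ℤ → ℝ} (hf : Summable fun k => f k ^ 2)
    (hg : Summable fun k => g k ^ 2) : Summable fun k => f k * g k := by
  apply Summable.of_abs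
  apply Summable.of_nonneg_of_le (fun k => abs_nonneg _) (fun k => ?_)
    (((hf.add hg).mul_left (1/2)))
  have := abs_mul (f k) (g k)
  nlinarith [sq_nonneg (|f k| - |g k|), abs_nonneg (f k), abs_nonneg (g k), sq_abs (f k), sq_abs (g k)]

lemma tsum_mul_le_sqrt {f g : ℤ → ℝ} (hfn : ∀ k, 0 ≤ f k) (hgn : ∀ k, 0 ≤ g k)
    (hf : Summable fun k => f k ^ 2) (hg : Summable fun k => g k ^ 2) :
    ∑' k, f k * g k ≤ Real.sqrt (∑' k, f k ^ 2) * Real.sqrt (∑' k, g k ^ 2) := by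
  apply (summable_mul_of_sq hf hg).tsum_le_of_sum_le
  intro s
  have h1 : (∑ i ∈ s, f i * g i)^2 ≤ (∑ i ∈ s, f i ^2) * (∑ i ∈ s, g i ^2) :=
    Finset.sum_mul_sq_le_sq_mul_sq s f g
  have h2 : ∑ i ∈ s, f i ^2 ≤ ∑' k, f k ^2 := hf.sum_le_tsum s (fun k _ => sq_nonneg _)
  have h3 : ∑ i ∈ s, g i ^2 ≤ ∑' k, g k ^2 := hg.sum_le_tsum s (fun k _ => sq_nonneg _)
  have hs : 0 ≤ ∑ i ∈ s, f i * g i :=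
    Finset.sum_nonneg (fun i _ => mul_nonneg (hfn i) (hgn i))
  have key : (∑ i ∈ s, f i * g i)^2 ≤ (∑' k, f k ^2) * (∑' k, g k ^2) := by
    refine le_trans h1 (mul_le_mul h2 h3 (Finset.sum_nonneg (fun i _ => sq_nonneg _)) ?_)
    exact tsum_nonneg (fun k => sq_nonneg _)
  calc ∑ i ∈ s, f i * g i = Real.sqrt ((∑ i ∈ s, f i * g i)^2) := (Real.sqrt_sq hs).symm
    _ ≤ Real.sqrt ((∑' k, f k ^2) * (∑' k, g k ^2)) := Real.sqrt_le_sqrt key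
    _ = _ := Real.sqrt_mul (tsum_nonneg (fun k => sq_nonneg _)) _

/-- `I(u,v,v) = |⟨u, v² − e^{τ∂ₓ³}(e^{−τ∂ₓ³}v)²⟩| ≤ c τ ‖∂ₓv‖² ‖∂ₓ²u‖` for `u ∈ H²`,
`v ∈ H¹` with `∂ₓ²v ∈ L²`. -/
theorem airy_commutator_Iuvv :
    ∃ c : ℝ, 0 < c ∧ ∀ (τ : ℝ), 0 < τ → ∀ u v : ℤ → ℂ,
      memH 1 u → memH 2 u → memH 1 v → Summable (fun k => ‖dx (dx v) k‖ ^ 2) →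
      ‖pairing u
          (fun k => fconv v v k - airy τ (fconv (airy (-τ) v) (airy (-τ) v)) k)‖ ≤
        c * τ * l2norm (dx v) ^ 2 * l2norm (dx (dx u)) := by
  have hSsum : Summable (fun k : ℤ => ((k:ℝ)^2)⁻¹) := by
    have h := (Real.summable_one_div_int_pow (p := 2)).2 (by norm_num)
    simpa [one_div] using h
  set S : ℝ := ∑' k : ℤ, ((k:ℝ)^2)⁻¹ with hSdef
  have hS1 : (1:ℝ) ≤ S := by
    have h := hSsum.le_tsum 1 (fun j _ => by positivity)
    simpa using h
  have hsqrtS : (1:ℝ) ≤ Real.sqrt S := by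
    rw [show (1:ℝ) = Real.sqrt 1 by simp]
    exact Real.sqrt_le_sqrt hS1
  refine ⟨6 * Real.sqrt S, by linarith, ?_⟩
  intro τ hτ u v hu1 hu2 hv1 hv2
  -- normalize Sobolev hypotheses
  have hv1' : Summable (fun k : ℤ => (1 + (k:ℝ)^2) * ‖v k‖^2) := by
    unfold memH at hv1
    simpa [Real.rpow_one] using hv1
  have hu2' : Summable (fun k : ℤ => (1 + (k:ℝ)^2)^2 * ‖u k‖^2) := by
    unfold memH at hu2
    have h : ∀ k:ℤ, (1 + (k:ℝ)^2)^(2:ℝ) = (1+(k:ℝ)^2)^2 := fun k => by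
      rw [show (2:ℝ) = ((2:ℕ):ℝ) by norm_num, Real.rpow_natCast]
    simpa only [h] using hu2
  -- the weight w
  set w : ℤ → ℝ := fun k => |(k:ℝ)| * ‖v k‖ with hwdef
  have hwnonneg : ∀ k, 0 ≤ w k := fun k => mul_nonneg (abs_nonneg _) (norm_nonneg _)
  have hwsq : ∀ k, w k ^ 2 = (k:ℝ)^2 * ‖v k‖^2 := fun k => by
    simp [hwdef, mul_pow, sq_abs]
  have hwsum : Summable (fun k => w k ^ 2) := by
    refine Summable.of_nonneg_of_le (fun k => sq_nonneg _) (fun k => ?_) hv1'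
    rw [hwsq k]
    nlinarith [sq_nonneg (‖v k‖)]
  set W : ℝ := ∑' k, w k ^ 2 with hWdef
  have hW0 : 0 ≤ W := tsum_nonneg fun k => sq_nonneg _
  have hWl2 : l2norm (dx v) ^ 2 = W := by
    have h1 : ∀ k:ℤ, ‖dx v k‖^2 = w k ^2 := by
      intro k
      simp only [dx, hwdef, norm_mul, Complex.norm_I, Complex.norm_intCast, one_mul]
    rw [l2norm, Real.sq_sqrt (tsum_nonneg fun k => sq_nonneg _)]
    exact tsum_congr h1
  have hvl2 : Summable (fun k => ‖v k‖^2) := by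
    refine Summable.of_nonneg_of_le (fun k => sq_nonneg _) (fun k => ?_) hv1'
    nlinarith [sq_nonneg ((k:ℝ)), sq_nonneg (‖v k‖)]
  -- main pointwise bound on g
  set g : ℤ → ℂ := fun k => fconv v v k - airy τ (fconv (airy (-τ) v) (airy (-τ) v)) k with hgdef
  have hgbound : ∀ k : ℤ, ‖g k‖ ≤ 6 * τ * |(k:ℝ)| * W := by
    intro k
    have hwshift : Summable (fun j => w (k - j) ^ 2) := by
      have := ((Equiv.subLeft k).summable_iff (f := fun j => w j ^ 2)).2 hwsum
      exact this.congr fun j => by simp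
    have hvshift : Summable (fun j => ‖v (k - j)‖ ^ 2) := by
      have := ((Equiv.subLeft k).summable_iff (f := fun j => ‖v j‖ ^ 2)).2 hvl2
      exact this.congr fun j => by simp
    have hsumvv : Summable (fun j => ‖v j‖ * ‖v (k - j)‖) := summable_mul_of_sq hvl2 hvshift
    have hsum1 : Summable (fun j => v j * v (k - j)) := by
      refine Summable.of_norm ?_
      simpa only [norm_mul] using hsumvv
    set θ : ℤ → ℝ := fun j => -(3 * τ * ((j * k * (k - j) : ℤ):ℝ)) with hθdef
    have merge : ∀ (c a b x y : ℂ), Complex.exp c * (Complex.exp a * x * (Complex.exp b * y)) =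
        Complex.exp (c + a + b) * (x * y) := by
      intro c a b x y
      rw [Complex.exp_add, Complex.exp_add]; ring
    have key : airy τ (fconv (airy (-τ) v) (airy (-τ) v)) k
        = ∑' j : ℤ, Complex.exp (((θ j : ℝ):ℂ) * Complex.I) * (v j * v (k - j)) := by
      simp only [airy, fconv]
      rw [← tsum_mul_left]
      refine tsum_congr fun j => ?_
      rw [merge]
      have hexp : (-Complex.I * ((τ:ℝ):ℂ) * (k:ℂ)^3) + (-Complex.I * ((-τ:ℝ):ℂ) * (j:ℂ)^3) +
          (-Complex.I * ((-τ:ℝ):ℂ) * ((k - j : ℤ):ℂ)^3) = ((θ j : ℝ):ℂ) * Complex.I := by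
        rw [hθdef]; push_cast; ring
      rw [hexp]
    have hsum2 : Summable (fun j => Complex.exp (((θ j : ℝ):ℂ) * Complex.I) * (v j * v (k - j))) := by
      refine Summable.of_norm ?_
      have h : ∀ j : ℤ, ‖Complex.exp (((θ j : ℝ):ℂ) * Complex.I) * (v j * v (k - j))‖
          = ‖v j‖ * ‖v (k - j)‖ := by
        intro j
        rw [norm_mul, norm_mul, Complex.norm_exp_ofReal_mul_I,
          one_mul]
      simpa only [h] using hsumvv
    have hgk : g k = ∑' j : ℤ, (1 - Complex.exp (((θ j : ℝ):ℂ) * Complex.I)) * (v j * v (k - j)) := by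
      rw [hgdef]
      simp only []
      rw [key, fconv]
      rw [← hsum1.tsum_sub hsum2]
      exact tsum_congr fun j => by ring
    have hb : ∀ j : ℤ, ‖(1 - Complex.exp (((θ j : ℝ):ℂ) * Complex.I)) * (v j * v (k - j))‖
        ≤ 6 * τ * |(k:ℝ)| * (w j * w (k - j)) := by
      intro j
      rw [norm_mul, norm_mul]
      have h1 := norm_one_sub_exp (θ j)
      have h2 : |θ j| = 3 * τ * (|(j:ℝ)| * |(k:ℝ)| * |((k - j : ℤ):ℝ)|) := by
        rw [hθdef]
        rw [abs_neg, abs_mul, abs_mul]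
        rw [abs_of_pos hτ, show |(3:ℝ)| = 3 by norm_num]
        rw [show ((j * k * (k - j) : ℤ):ℝ) = (j:ℝ) * (k:ℝ) * ((k - j : ℤ):ℝ) by push_cast; ring]
        rw [abs_mul, abs_mul]
      have h3 : ‖1 - Complex.exp (((θ j : ℝ):ℂ) * Complex.I)‖ ≤
          6 * τ * (|(j:ℝ)| * |(k:ℝ)| * |((k - j : ℤ):ℝ)|) := by
        calc ‖1 - Complex.exp (((θ j : ℝ):ℂ) * Complex.I)‖ ≤ 2 * |θ j| := h1
          _ = 6 * τ * (|(j:ℝ)| * |(k:ℝ)| * |((k - j : ℤ):ℝ)|) := by rw [h2]; ring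
      calc ‖1 - Complex.exp (((θ j : ℝ):ℂ) * Complex.I)‖ * (‖v j‖ * ‖v (k - j)‖)
          ≤ (6 * τ * (|(j:ℝ)| * |(k:ℝ)| * |((k - j : ℤ):ℝ)|)) * (‖v j‖ * ‖v (k - j)‖) := by
            refine mul_le_mul_of_nonneg_right h3 ?_
            exact mul_nonneg (norm_nonneg _) (norm_nonneg _)
        _ = 6 * τ * |(k:ℝ)| * (w j * w (k - j)) := by
            rw [hwdef]; ring
    have hsum3 : Summable (fun j => 6 * τ * |(k:ℝ)| * (w j * w (k - j))) :=
      (summable_mul_of_sq hwsum hwshift).mul_left _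
    have hsumnorm : Summable (fun j => ‖(1 - Complex.exp (((θ j : ℝ):ℂ) * Complex.I)) * (v j * v (k - j))‖) :=
      Summable.of_nonneg_of_le (fun j => norm_nonneg _) hb hsum3
    have hconv : ∑' j : ℤ, w j * w (k - j) ≤ W := by
      have h := tsum_mul_le_sqrt (f := w) (g := fun j => w (k - j)) hwnonneg
        (fun j => hwnonneg _) hwsum hwshift
      have hshift : (∑' j : ℤ, w (k - j) ^ 2) = W := by
        rw [hWdef]
        have := (Equiv.subLeft k).tsum_eq (f := fun j => w j ^ 2)
        rw [← this]
        exact tsum_congr fun j => by simp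
      rw [hshift] at h
      calc ∑' j : ℤ, w j * w (k - j) ≤ Real.sqrt W * Real.sqrt W := h
        _ = W := Real.mul_self_sqrt hW0
    calc ‖g k‖ = ‖∑' j : ℤ, (1 - Complex.exp (((θ j : ℝ):ℂ) * Complex.I)) * (v j * v (k - j))‖ := by
          rw [hgk]
      _ ≤ ∑' j : ℤ, ‖(1 - Complex.exp (((θ j : ℝ):ℂ) * Complex.I)) * (v j * v (k - j))‖ :=
          norm_tsum_le_tsum_norm hsumnorm
      _ ≤ ∑' j : ℤ, 6 * τ * |(k:ℝ)| * (w j * w (k - j)) := hsumnorm.tsum_le_tsum hb hsum3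
      _ = 6 * τ * |(k:ℝ)| * ∑' j : ℤ, w j * w (k - j) := tsum_mul_left
      _ ≤ 6 * τ * |(k:ℝ)| * W := by
          refine mul_le_mul_of_nonneg_left hconv ?_
          positivity
  -- Cauchy-Schwarz for the u-sum
  set a : ℤ → ℝ := fun k => |(k:ℝ)|⁻¹ with hadef
  set b : ℤ → ℝ := fun k => (k:ℝ)^2 * ‖u k‖ with hbdef
  have hanonneg : ∀ k, 0 ≤ a k := fun k => by positivity
  have hbnonneg : ∀ k, 0 ≤ b k := fun k => mul_nonneg (sq_nonneg _) (norm_nonneg _)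
  have ha2 : ∀ k : ℤ, a k ^ 2 = ((k:ℝ)^2)⁻¹ := fun k => by
    show |(k:ℝ)|⁻¹ ^ 2 = ((k:ℝ)^2)⁻¹
    rw [inv_pow, sq_abs]
  have hab : ∀ k : ℤ, a k * b k = |(k:ℝ)| * ‖u k‖ := by
    intro k
    rcases eq_or_ne k 0 with rfl | hk
    · simp [hadef, hbdef]
    · have hk' : |(k:ℝ)| ≠ 0 := by
        simp only [abs_ne_zero, ne_eq, Int.cast_eq_zero]
        exact hk
      show |(k:ℝ)|⁻¹ * ((k:ℝ)^2 * ‖u k‖) = |(k:ℝ)| * ‖u k‖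
      rw [← sq_abs]
      rw [show |(k:ℝ)|⁻¹ * (|(k:ℝ)|^2 * ‖u k‖) = (|(k:ℝ)|⁻¹ * |(k:ℝ)|) * (|(k:ℝ)| * ‖u k‖) from by
        ring]
      rw [inv_mul_cancel₀ hk', one_mul]
  have hasum : Summable (fun k => a k ^ 2) := by
    simpa only [ha2] using hSsum
  have hbsum : Summable (fun k => b k ^ 2) := by
    refine Summable.of_nonneg_of_le (fun k => sq_nonneg _) (fun k => ?_) hu2'
    rw [hbdef]
    have h1 : ((k:ℝ)^2 * ‖u k‖)^2 = (k:ℝ)^4 * ‖u k‖^2 := by ring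
    rw [h1]
    nlinarith [sq_nonneg ((k:ℝ)), sq_nonneg (‖u k‖), sq_nonneg ((k:ℝ)^2)]
  have hku_sum : Summable (fun k : ℤ => |(k:ℝ)| * ‖u k‖) :=
    (summable_mul_of_sq hasum hbsum).congr (fun k => hab k)
  have hDl2 : Real.sqrt (∑' k : ℤ, b k ^ 2) = l2norm (dx (dx u)) := by
    rw [l2norm]
    congr 1
    refine tsum_congr fun k => ?_
    rw [hbdef]
    simp only [dx, norm_mul, Complex.norm_I, Complex.norm_intCast, one_mul]
    rw [← sq_abs ((k:ℝ))]
    ring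
  have hCS : ∑' k : ℤ, |(k:ℝ)| * ‖u k‖ ≤ Real.sqrt S * l2norm (dx (dx u)) := by
    have h := tsum_mul_le_sqrt (f := a) (g := b) hanonneg hbnonneg hasum hbsum
    rw [show (∑' k : ℤ, a k * b k) = ∑' k : ℤ, |(k:ℝ)| * ‖u k‖ from tsum_congr hab] at h
    rw [show (∑' k : ℤ, a k ^ 2) = S from by rw [hSdef]; exact tsum_congr ha2] at h
    rw [hDl2] at h
    exact h
  -- put it together
  have hterm : ∀ k : ℤ, ‖u k * g (-k)‖ ≤ ‖u k‖ * (6 * τ * |(k:ℝ)| * W) := by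
    intro k
    rw [norm_mul]
    refine mul_le_mul_of_nonneg_left ?_ (norm_nonneg _)
    have h := hgbound (-k)
    simpa using h
  have hbsum2 : Summable (fun k => ‖u k‖ * (6 * τ * |(k:ℝ)| * W)) := by
    have h := hku_sum.mul_left (6 * τ * W)
    exact h.congr fun k => by ring
  have hnormsum : Summable (fun k => ‖u k * g (-k)‖) :=
    Summable.of_nonneg_of_le (fun _ => norm_nonneg _) hterm hbsum2
  calc ‖pairing u g‖ ≤ ∑' k : ℤ, ‖u k * g (-k)‖ := norm_tsum_le_tsum_norm hnormsum
    _ ≤ ∑' k : ℤ, ‖u k‖ * (6 * τ * |(k:ℝ)| * W) := hnormsum.tsum_le_tsum hterm hbsum2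
    _ = 6 * τ * W * ∑' k : ℤ, |(k:ℝ)| * ‖u k‖ := by
        rw [← tsum_mul_left]
        exact tsum_congr fun k => by ring
    _ ≤ 6 * τ * W * (Real.sqrt S * l2norm (dx (dx u))) := by
        refine mul_le_mul_of_nonneg_left hCS ?_
        positivity
    _ = 6 * Real.sqrt S * τ * l2norm (dx v) ^ 2 * l2norm (dx (dx u)) := by
        rw [hWl2]; ring
end

section
/- Let f, g ∈ L²(𝕋) and define for τ, tₙ ∈ ℝ the finite quantity S := Σ_{k₁,k₂≠0, k₁+k₂≠0} [e^{−i(tₙ+τ)((k₁+k₂)³−k₁³−k₂³)} − e^{−itₙ((k₁+k₂)³−k₁³−k₂³)}]·(−3k₁k₂)^{−1}·f̂_{k₁}ĝ_{k₂}·e^{i(k₁+k₂)x}. Then S = (1/3)e^{(tₙ+τ)∂ₓ³}[(e^{−(tₙ+τ)∂ₓ³}∂ₓ⁻¹f)(e^{−(tₙ+τ)∂ₓ³}∂ₓ⁻¹g)] − (1/3)e^{tₙ∂ₓ³}[(e^{−tₙ∂ₓ³}∂ₓ⁻¹f)(e^{−tₙ∂ₓ³}∂ₓ⁻¹g)], where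 ∂ₓ⁻¹ is the Fourier multiplier (ik)⁻¹ for k ≠ 0 and 0 for k = 0, provided f̂₀ = ĝ₀ = 0 and f, g are smooth enough for the sums to converge absolutely (e.g. f, g ∈ H¹). -/
/-- `∂ₓ⁻¹`: the Fourier multiplier `(ik)⁻¹` for `k ≠ 0`, and `0` for `k = 0`. -/
noncomputable def invdx (f : ℤ → ℂ) : ℤ → ℂ :=
  fun k => if k = 0 then 0 else f k / (Complex.I * (k : ℂ))

noncomputable def hfun (f g : ℤ → ℂ) (m : ℤ) (t : ℝ) (j : ℤ) : ℂ :=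
  if j ≠ 0 ∧ m - j ≠ 0 then
    Complex.exp (-Complex.I * (t : ℂ) * ((m : ℂ) ^ 3 - (j : ℂ) ^ 3 - ((m - j : ℤ) : ℂ) ^ 3))
      * f j * g (m - j) / ((Complex.I * (j : ℂ)) * (Complex.I * ((m - j : ℤ) : ℂ)))
  else 0

lemma key (f g : ℤ → ℂ) (m : ℤ) (t : ℝ) :
    airy t (fconv (airy (-t) (invdx f)) (airy (-t) (invdx g))) m
      = ∑' j : ℤ, hfun f g m t j := by
  unfold airy fconv invdx hfun
  rw [← tsum_mul_left]
  refine tsum_congr fun j => ?_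
  by_cases hj : j = 0
  · simp [hj]
  by_cases hmj : m - j = 0
  · simp [hj, hmj]
  simp only [hj, hmj, if_neg, ite_false, ne_eq, not_false_eq_true, and_self, if_true]
  have he : Complex.exp (-Complex.I * (t : ℂ) *
      ((m : ℂ) ^ 3 - (j : ℂ) ^ 3 - ((m - j : ℤ) : ℂ) ^ 3))
      = Complex.exp (-Complex.I * (t : ℂ) * (m : ℂ) ^ 3)
        * (Complex.exp (-Complex.I * ((-t : ℝ) : ℂ) * (j : ℂ) ^ 3)
        * Complex.exp (-Complex.I * ((-t : ℝ) : ℂ) * ((m - j : ℤ) : ℂ) ^ 3)) := by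
    rw [← Complex.exp_add, ← Complex.exp_add]
    push_cast
    ring_nf
  rw [he]
  ring

lemma one_le_norm_int (n : ℤ) (hn : n ≠ 0) : (1 : ℝ) ≤ ‖(n : ℂ)‖ := by
  rw [show ((n : ℤ) : ℂ) = (((n : ℝ)) : ℂ) by push_cast; ring, Complex.norm_real,
    Real.norm_eq_abs, ← Int.cast_abs]
  exact_mod_cast Int.one_le_abs hn

lemma hsummable (f g : ℤ → ℂ) (m : ℤ) (t : ℝ) (hf : memH 1 f) (hg : memH 1 g) :
    Summable (hfun f g m t) := by
  have hf2 : Summable fun k : ℤ => ‖f k‖ ^ 2 := by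
    refine Summable.of_nonneg_of_le (fun k => by positivity) (fun k => ?_) hf
    have h1 : (1 + (k : ℝ) ^ 2) ^ (1 : ℝ) = 1 + (k : ℝ) ^ 2 := Real.rpow_one _
    rw [h1]; nlinarith [sq_nonneg (k : ℝ), sq_nonneg ‖f k‖, sq_nonneg ((k:ℝ) * ‖f k‖)]
  have hg2 : Summable fun k : ℤ => ‖g k‖ ^ 2 := by
    refine Summable.of_nonneg_of_le (fun k => by positivity) (fun k => ?_) hg
    have h1 : (1 + (k : ℝ) ^ 2) ^ (1 : ℝ) = 1 + (k : ℝ) ^ 2 := Real.rpow_one _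
    rw [h1]; nlinarith [sq_nonneg (k : ℝ), sq_nonneg ‖g k‖, sq_nonneg ((k:ℝ) * ‖g k‖)]
  have hg2' : Summable fun j : ℤ => ‖g (m - j)‖ ^ 2 :=
    hg2.comp_injective (fun a b h => by omega)
  have hbound : Summable fun j : ℤ => ‖f j‖ * ‖g (m - j)‖ := by
    refine Summable.of_nonneg_of_le (fun j => by positivity) (fun j => ?_) (hf2.add hg2')
    nlinarith [sq_nonneg (‖f j‖ - ‖g (m - j)‖), norm_nonneg (f j), norm_nonneg (g (m - j))]
  refine Summable.of_norm_bounded hbound fun j => ?_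
  unfold hfun
  by_cases h : j ≠ 0 ∧ m - j ≠ 0
  · rw [if_pos h]
    obtain ⟨hj, hmj⟩ := h
    have hE : ((m : ℂ) ^ 3 - (j : ℂ) ^ 3 - ((m - j : ℤ) : ℂ) ^ 3)
        = (((m ^ 3 - j ^ 3 - (m - j) ^ 3 : ℤ) : ℝ) : ℂ) := by push_cast; ring
    have hexp : ‖Complex.exp (-Complex.I * (t : ℂ) *
        ((m : ℂ) ^ 3 - (j : ℂ) ^ 3 - ((m - j : ℤ) : ℂ) ^ 3))‖ = 1 := by
      rw [hE]
      have : -Complex.I * (t : ℂ) * (((m ^ 3 - j ^ 3 - (m - j) ^ 3 : ℤ) : ℝ) : ℂ)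
          = ((-(t * ((m ^ 3 - j ^ 3 - (m - j) ^ 3 : ℤ) : ℝ)) : ℝ) : ℂ) * Complex.I := by
        push_cast; ring
      rw [this, Complex.norm_exp_ofReal_mul_I]
    rw [norm_div, norm_mul, norm_mul, hexp, one_mul]
    have hjn : (1 : ℝ) ≤ ‖Complex.I * (j : ℂ)‖ := by
      rw [norm_mul, Complex.norm_I, one_mul]; exact one_le_norm_int j hj
    have hmn : (1 : ℝ) ≤ ‖Complex.I * ((m - j : ℤ) : ℂ)‖ := by
      rw [norm_mul, Complex.norm_I, one_mul]; exact one_le_norm_int _ hmj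
    have hd : (1 : ℝ) ≤ ‖Complex.I * (j : ℂ) * (Complex.I * ((m - j : ℤ) : ℂ))‖ := by
      rw [norm_mul]; nlinarith
    exact div_le_self (by positivity) hd
  · rw [if_neg h]
    simp only [norm_zero]
    positivity

/-- Exact integration identity: the resonance sum
`Σ_{k₁,k₂≠0, k₁+k₂≠0} [e^{−i(tₙ+τ)·(…)} − e^{−itₙ·(…)}] (−3k₁k₂)⁻¹ f̂_{k₁} ĝ_{k₂} e^{i(k₁+k₂)x}`
equals, mode by mode,
`(1/3) e^{(tₙ+τ)∂ₓ³}[(e^{−(tₙ+τ)∂ₓ³}∂ₓ⁻¹f)(e^{−(tₙ+τ)∂ₓ³}∂ₓ⁻¹g)]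
  − (1/3) e^{tₙ∂ₓ³}[(e^{−tₙ∂ₓ³}∂ₓ⁻¹f)(e^{−tₙ∂ₓ³}∂ₓ⁻¹g)]`. -/
theorem exact_integration_identity (f g : ℤ → ℂ) (hf0 : f 0 = 0) (hg0 : g 0 = 0)
    (hf : memH 1 f) (hg : memH 1 g) (τ tₙ : ℝ) (m : ℤ) :
    (∑' k₁ : ℤ, if k₁ ≠ 0 ∧ m - k₁ ≠ 0 ∧ m ≠ 0 then
        (Complex.exp (-Complex.I * ((tₙ : ℂ) + (τ : ℂ)) *
            (((k₁ : ℂ) + ((m - k₁ : ℤ) : ℂ)) ^ 3 - (k₁ : ℂ) ^ 3 - ((m - k₁ : ℤ) : ℂ) ^ 3))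
          - Complex.exp (-Complex.I * (tₙ : ℂ) *
            (((k₁ : ℂ) + ((m - k₁ : ℤ) : ℂ)) ^ 3 - (k₁ : ℂ) ^ 3 - ((m - k₁ : ℤ) : ℂ) ^ 3)))
          * (-3 * (k₁ : ℂ) * ((m - k₁ : ℤ) : ℂ))⁻¹ * f k₁ * g (m - k₁)
      else 0) =
      (1 / 3) * airy (tₙ + τ)
          (fconv (airy (-(tₙ + τ)) (invdx f)) (airy (-(tₙ + τ)) (invdx g))) m
        - (1 / 3) * airy tₙ (fconv (airy (-tₙ) (invdx f)) (airy (-tₙ) (invdx g))) m := by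
  have hterm : ∀ j : ℤ, (if j ≠ 0 ∧ m - j ≠ 0 ∧ m ≠ 0 then
        (Complex.exp (-Complex.I * ((tₙ : ℂ) + (τ : ℂ)) *
            (((j : ℂ) + ((m - j : ℤ) : ℂ)) ^ 3 - (j : ℂ) ^ 3 - ((m - j : ℤ) : ℂ) ^ 3))
          - Complex.exp (-Complex.I * (tₙ : ℂ) *
            (((j : ℂ) + ((m - j : ℤ) : ℂ)) ^ 3 - (j : ℂ) ^ 3 - ((m - j : ℤ) : ℂ) ^ 3)))
          * (-3 * (j : ℂ) * ((m - j : ℤ) : ℂ))⁻¹ * f j * g (m - j)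
      else 0)
      = (1 / 3 : ℂ) * hfun f g m (tₙ + τ) j - (1 / 3 : ℂ) * hfun f g m tₙ j := by
    intro j
    by_cases hj : j = 0
    · simp [hfun, hj]
    by_cases hmj : m - j = 0
    · simp [hfun, hmj]
    by_cases hm : m = 0
    · subst hm
      rw [if_neg (by tauto)]
      unfold hfun
      rw [if_pos ⟨hj, hmj⟩, if_pos ⟨hj, hmj⟩,
        show ((0 : ℤ) : ℂ) ^ 3 - (j : ℂ) ^ 3 - ((0 - j : ℤ) : ℂ) ^ 3 = 0 from by push_cast; ring]
      ring
    rw [if_pos ⟨hj, hmj, hm⟩]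
    unfold hfun
    rw [if_pos ⟨hj, hmj⟩, if_pos ⟨hj, hmj⟩,
      show (j : ℂ) + ((m - j : ℤ) : ℂ) = (m : ℂ) from by push_cast; ring]
    have hj' : (j : ℂ) ≠ 0 := Int.cast_ne_zero.mpr hj
    have hmj' : ((m - j : ℤ) : ℂ) ≠ 0 := Int.cast_ne_zero.mpr hmj
    have hI : Complex.I * (j : ℂ) * (Complex.I * ((m - j : ℤ) : ℂ))
        = -((j : ℂ) * ((m - j : ℤ) : ℂ)) := by
      linear_combination ((j : ℂ) * ((m - j : ℤ) : ℂ)) * Complex.I_sq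
    rw [hI, show (((tₙ + τ : ℝ)) : ℂ) = (tₙ : ℂ) + (τ : ℂ) from by push_cast; ring]
    field_simp
    ring
  rw [tsum_congr hterm,
    Summable.tsum_sub ((hsummable f g m (tₙ + τ) hf hg).mul_left _)
      ((hsummable f g m tₙ hf hg).mul_left _),
    tsum_mul_left, tsum_mul_left, ← key, ← key]
end
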